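/- Let ℓ : ℕ → ℕ be strictly increasing with ∑_n 2^{-(ℓ(n+1) − ℓ(n))} < ∞, and let P ⊆ 2^ω be a closed set with μ(P) > 0. Then there exists a nonempty pruned tree T that is ℓ-perfect and satisfies [T] ⊆ P. -/

import Mathlib

open scoped ENNReal

/-- The length-`n` prefix of a point of Cantor space `2^ω = ℕ → Bool`, as a binary string. -/
def pre (x : ℕ → Bool) (n : ℕ) : List Bool := (List.range n).map x

/-- `σ` is a (finite) prefix of `x ∈ 2^ω`. -/
def PrefOf (σ : List Bool) (x : ℕ → Bool) : Prop := pre x σ.length = σ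

/-- The cylinder `[σ] = {x ∈ 2^ω : σ ⪯ x}`. -/
def cyl (σ : List Bool) : Set (ℕ → Bool) := {x | PrefOf σ x}

/-- `[V] = ⋃_{σ ∈ V} [σ]`. -/
def cylSet (V : Set (List Bool)) : Set (ℕ → Bool) := ⋃ σ ∈ V, cyl σ

/-- A tree: a set of binary strings closed under prefixes. -/
def IsTree (T : Set (List Bool)) : Prop := ∀ σ ∈ T, ∀ τ : List Bool, τ <+: σ → τ ∈ T

/-- A pruned tree: every node has a proper extension in the tree. -/
def Pruned (T : Set (List Bool)) : Prop := ∀ σ ∈ T, ∃ τ ∈ T, σ <+: τ ∧ σ ≠ τ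

/-- The set `[T]` of paths of a tree `T`. -/
def paths (T : Set (List Bool)) : Set (ℕ → Bool) := {x | ∀ n, pre x n ∈ T}

/-- The fair-coin (uniform) product measure on Cantor space, characterized by its
values `μ [σ] = 2^{-|σ|}` on cylinders (this determines `μ` uniquely). -/
def IsFairCoin (μ : MeasureTheory.Measure (ℕ → Bool)) : Prop :=
  ∀ σ : List Bool, μ (cyl σ) = 2⁻¹ ^ σ.length

/-- `σ` has at least two extensions of length `L` in `T`. -/
def TwoExt (T : Set (List Bool)) (σ : List Bool) (L : ℕ) : Prop :=
  ∃ τ₁ ∈ T, ∃ τ₂ ∈ T,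
    σ <+: τ₁ ∧ σ <+: τ₂ ∧ τ₁.length = L ∧ τ₂.length = L ∧ τ₁ ≠ τ₂

/-- `T` is `ℓ`-perfect: for all but finitely many `n`, every node of `T` of length `ℓ n`
has at least two extensions in `T` of length `ℓ (n+1)`. -/
def EllPerfect (ℓ : ℕ → ℕ) (T : Set (List Bool)) : Prop :=
  ∀ᶠ n in Filter.atTop, ∀ σ ∈ T, σ.length = ℓ n → TwoExt T σ (ℓ (n + 1))


namespace Stmt15

open MeasureTheory Filter

lemma length_pre (x : ℕ → Bool) (n : ℕ) : (pre x n).length = n := by simp [pre]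

lemma take_pre (x : ℕ → Bool) (a b : ℕ) : (pre x b).take a = pre x (min a b) := by
  simp [pre, ← List.map_take, List.take_range]

lemma prefOf_pre (x : ℕ → Bool) (n : ℕ) : PrefOf (pre x n) x := by
  unfold PrefOf; rw [length_pre]

lemma pre_prefix (x : ℕ → Bool) {a b : ℕ} (h : a ≤ b) : pre x a <+: pre x b := by
  rw [List.prefix_iff_eq_take, length_pre, take_pre, min_eq_left h]

lemma mem_cyl {σ : List Bool} {x : ℕ → Bool} : x ∈ cyl σ ↔ pre x σ.length = σ := Iff.rfl

lemma cyl_nil : cyl ([] : List Bool) = Set.univ := by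
  ext x; simp [mem_cyl, pre]

lemma coord_of_pre_eq {y x : ℕ → Bool} {n i : ℕ} (h : pre y n = pre x n) (hi : i < n) :
    y i = x i := by
  have h1 : (pre y n).getD i false = (pre x n).getD i false := by rw [h]
  simpa [pre, List.getD_eq_getElem?_getD, List.getElem?_map, List.getElem?_range, hi] using h1

lemma exists_ofFn {ρ : List Bool} {n : ℕ} (h : ρ.length = n) :
    ∃ f : Fin n → Bool, List.ofFn f = ρ := by
  subst h; exact ⟨ρ.get, List.ofFn_get ρ⟩

/-- extensions of `σ` of length `L`, as a finset -/
def extFin (σ : List Bool) (L : ℕ) : Finset (List Bool) :=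
  (Finset.univ : Finset (Fin (L - σ.length) → Bool)).image fun f => σ ++ List.ofFn f

lemma mem_extFin {σ τ : List Bool} {L : ℕ} (h : σ.length ≤ L) :
    τ ∈ extFin σ L ↔ σ <+: τ ∧ τ.length = L := by
  constructor
  · intro ht
    simp only [extFin, Finset.mem_image, Finset.mem_univ, true_and] at ht
    obtain ⟨f, rfl⟩ := ht
    refine ⟨List.prefix_append _ _, ?_⟩
    simp; omega
  · rintro ⟨⟨ρ, rfl⟩, hlen⟩
    have hρ : ρ.length = L - σ.length := by simp at hlen; omega
    obtain ⟨f, hf⟩ := exists_ofFn hρ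
    simp only [extFin, Finset.mem_image, Finset.mem_univ, true_and]
    exact ⟨f, by rw [hf]⟩

lemma card_extFin (σ : List Bool) (L : ℕ) :
    (extFin σ L).card = 2 ^ (L - σ.length) := by
  rw [extFin, Finset.card_image_of_injective _
    (fun f g hfg => List.ofFn_injective (List.append_cancel_left hfg))]
  simp

lemma cyl_subset_extFin {σ : List Bool} {L : ℕ} (h : σ.length ≤ L) :
    cyl σ ⊆ ⋃ τ ∈ extFin σ L, cyl τ := by
  intro x hx
  have h1 : pre x L ∈ extFin σ L := by
    rw [mem_extFin h]
    refine ⟨?_, length_pre x L⟩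
    rw [mem_cyl] at hx
    calc σ = pre x σ.length := hx.symm
      _ <+: pre x L := pre_prefix x h
  exact Set.mem_biUnion h1 (prefOf_pre x L)

lemma measure_inter_cyl_le (μ : Measure (ℕ → Bool)) (A : Set (ℕ → Bool))
    {σ : List Bool} {L : ℕ} (h : σ.length ≤ L) :
    μ (A ∩ cyl σ) ≤ ∑ τ ∈ extFin σ L, μ (A ∩ cyl τ) := by
  refine le_trans (measure_mono ?_) (measure_biUnion_finset_le _ _)
  intro x hx
  have h1 := cyl_subset_extFin h hx.2
  simp only [Set.mem_iUnion] at h1 ⊢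
  obtain ⟨τ, hτ, hxτ⟩ := h1
  exact ⟨τ, hτ, hx.1, hxτ⟩

/-- The key "good node" predicate. -/
def Good (μ : Measure (ℕ → Bool)) (P : Set (ℕ → Bool)) (ℓ : ℕ → ℕ)
    (ε : ℕ → ℝ≥0∞) (N : ℕ) (σ : List Bool) : Prop :=
  (∃ m, N ≤ m ∧ σ.length = ℓ m) ∧
    ∀ n, N ≤ n → ℓ n ≤ σ.length → ε n * 2⁻¹ ^ (ℓ n) ≤ μ (P ∩ cyl (σ.take (ℓ n)))

variable {μ : Measure (ℕ → Bool)} {P : Set (ℕ → Bool)} {ℓ : ℕ → ℕ}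
  {ε : ℕ → ℝ≥0∞} {N : ℕ}

lemma Good.take (hℓ : StrictMono ℓ) {σ : List Bool} (hg : Good μ P ℓ ε N σ) {n : ℕ}
    (hn : N ≤ n) (h : ℓ n ≤ σ.length) : Good μ P ℓ ε N (σ.take (ℓ n)) := by
  have hlen : (σ.take (ℓ n)).length = ℓ n := by
    rw [List.length_take]; omega
  refine ⟨⟨n, hn, hlen⟩, ?_⟩
  intro n' hn' h'
  rw [hlen] at h'
  rw [List.take_take, min_eq_left h']
  exact hg.2 n' hn' (le_trans h' h)

lemma pow_half_pos (L : ℕ) : (0:ℝ≥0∞) < 2⁻¹ ^ L :=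
  ENNReal.pow_pos (by norm_num) L

lemma pow_half_ne_top (L : ℕ) : (2⁻¹:ℝ≥0∞) ^ L ≠ ⊤ :=
  ENNReal.pow_ne_top (by norm_num)

lemma two_pow_mul_pow_half {a L : ℕ} (h : a ≤ L) :
    (2:ℝ≥0∞) ^ (L - a) * 2⁻¹ ^ L = 2⁻¹ ^ a := by
  have hk : a + (L - a) = L := by omega
  have h2 : (2:ℝ≥0∞) * 2⁻¹ = 1 := ENNReal.mul_inv_cancel (by norm_num) (by norm_num)
  calc (2:ℝ≥0∞) ^ (L - a) * 2⁻¹ ^ L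
      = (2:ℝ≥0∞) ^ (L - a) * (2⁻¹ ^ a * 2⁻¹ ^ (L - a)) := by rw [← pow_add, hk]
    _ = 2⁻¹ ^ a * ((2:ℝ≥0∞) ^ (L - a) * 2⁻¹ ^ (L - a)) := by ring
    _ = 2⁻¹ ^ a * ((2:ℝ≥0∞) * 2⁻¹) ^ (L - a) := by rw [mul_pow]
    _ = 2⁻¹ ^ a := by rw [h2, one_pow, mul_one]

lemma good_split (hμ : IsFairCoin μ) (hℓ : StrictMono ℓ)
    (hmono : ∀ n, N ≤ n →
      ε (n+1) * 2⁻¹ ^ (ℓ n) + 2 * 2⁻¹ ^ (ℓ (n+1)) ≤ ε n * 2⁻¹ ^ (ℓ n))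
    (hfin : ∀ n, ε n ≠ ⊤)
    {σ : List Bool} {m : ℕ} (hm : N ≤ m) (hlen : σ.length = ℓ m)
    (hg : Good μ P ℓ ε N σ) :
    ∃ τ₁ τ₂, Good μ P ℓ ε N τ₁ ∧ Good μ P ℓ ε N τ₂ ∧ σ <+: τ₁ ∧ σ <+: τ₂ ∧
      τ₁.length = ℓ (m+1) ∧ τ₂.length = ℓ (m+1) ∧ τ₁ ≠ τ₂ := by
  classical
  set L := ℓ (m+1) with hL
  have hσL : σ.length ≤ L := by rw [hlen]; exact (hℓ (Nat.lt_succ_self m)).le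
  set c := ε (m+1) * 2⁻¹ ^ L with hc
  set E := extFin σ L with hE
  set G := E.filter (fun τ => c ≤ μ (P ∩ cyl τ)) with hG
  have goodG : ∀ τ ∈ G, Good μ P ℓ ε N τ ∧ σ <+: τ ∧ τ.length = L := by
    intro τ hτ
    obtain ⟨hτE, hτc⟩ := Finset.mem_filter.1 hτ
    obtain ⟨hpre, hlenτ⟩ := (mem_extFin hσL).1 hτE
    refine ⟨⟨⟨m+1, by omega, hlenτ⟩, ?_⟩, hpre, hlenτ⟩
    intro n hn hℓn
    rw [hlenτ] at hℓn
    have hnm : n ≤ m + 1 := hℓ.le_iff_le.1 hℓn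
    rcases eq_or_lt_of_le hnm with heq | hlt
    · rw [heq]
      rw [show τ.take (ℓ (m+1)) = τ from by rw [← hL, ← hlenτ]; exact List.take_length]
      exact hτc
    · have hn' : n ≤ m := by omega
      have h1 : ℓ n ≤ σ.length := by rw [hlen]; exact hℓ.le_iff_le.2 hn'
      obtain ⟨ρ, rfl⟩ := hpre
      rw [List.take_append, Nat.sub_eq_zero_of_le h1, List.take_zero,
        List.append_nil]
      exact hg.2 n hn h1
  have hlow : ε m * 2⁻¹ ^ (ℓ m) ≤ μ (P ∩ cyl σ) := by
    have h := hg.2 m hm (le_of_eq hlen.symm)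
    rwa [show σ.take (ℓ m) = σ from by rw [← hlen]; exact List.take_length] at h
  have htwo : 1 < G.card := by
    by_contra hcard
    push_neg at hcard
    have h3 : ∑ τ ∈ G, μ (P ∩ cyl τ) ≤ 2⁻¹ ^ L := by
      calc ∑ τ ∈ G, μ (P ∩ cyl τ) ≤ G.card • (2⁻¹:ℝ≥0∞) ^ L := by
            refine Finset.sum_le_card_nsmul _ _ _ ?_
            intro τ hτ
            have hτE : τ ∈ E := (Finset.mem_filter.1 hτ).1
            have hmem := (mem_extFin hσL).1 hτE
            calc μ (P ∩ cyl τ) ≤ μ (cyl τ) := measure_mono Set.inter_subset_right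
              _ = 2⁻¹ ^ L := by rw [hμ τ, hmem.2]
        _ = (G.card : ℝ≥0∞) * 2⁻¹ ^ L := nsmul_eq_mul _ _
        _ ≤ 1 * 2⁻¹ ^ L := by
            refine mul_le_mul_left ?_ _
            exact_mod_cast hcard
        _ = 2⁻¹ ^ L := one_mul _
    have h4 : ∑ τ ∈ E.filter (fun τ => ¬ c ≤ μ (P ∩ cyl τ)), μ (P ∩ cyl τ)
        ≤ ε (m+1) * 2⁻¹ ^ (ℓ m) := by
      calc ∑ τ ∈ E.filter (fun τ => ¬ c ≤ μ (P ∩ cyl τ)), μ (P ∩ cyl τ)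
          ≤ (E.filter (fun τ => ¬ c ≤ μ (P ∩ cyl τ))).card • c := by
            refine Finset.sum_le_card_nsmul _ _ _ ?_
            intro τ hτ
            exact le_of_not_ge (Finset.mem_filter.1 hτ).2
        _ = ((E.filter (fun τ => ¬ c ≤ μ (P ∩ cyl τ))).card : ℝ≥0∞) * c := nsmul_eq_mul _ _
        _ ≤ (E.card : ℝ≥0∞) * c := by
            refine mul_le_mul_left ?_ _
            exact_mod_cast Finset.card_filter_le _ _
        _ = (2:ℝ≥0∞) ^ (L - ℓ m) * c := by
            rw [hE, card_extFin, hlen]; push_cast; ring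
        _ = ε (m+1) * ((2:ℝ≥0∞) ^ (L - ℓ m) * 2⁻¹ ^ L) := by rw [hc]; ring
        _ = ε (m+1) * 2⁻¹ ^ (ℓ m) := by
            rw [two_pow_mul_pow_half (by rw [← hlen]; exact hσL)]
    have hbound : μ (P ∩ cyl σ) ≤ 2⁻¹ ^ L + ε (m+1) * 2⁻¹ ^ (ℓ m) := by
      calc μ (P ∩ cyl σ) ≤ ∑ τ ∈ E, μ (P ∩ cyl τ) := measure_inter_cyl_le μ P hσL
        _ = ∑ τ ∈ G, μ (P ∩ cyl τ)
            + ∑ τ ∈ E.filter (fun τ => ¬ c ≤ μ (P ∩ cyl τ)), μ (P ∩ cyl τ) :=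
          (Finset.sum_filter_add_sum_filter_not E _ _).symm
        _ ≤ 2⁻¹ ^ L + ε (m+1) * 2⁻¹ ^ (ℓ m) := add_le_add h3 h4
    have hchain : ε (m+1) * 2⁻¹ ^ (ℓ m) + 2 * 2⁻¹ ^ L
        ≤ ε (m+1) * 2⁻¹ ^ (ℓ m) + 2⁻¹ ^ L := by
      calc ε (m+1) * 2⁻¹ ^ (ℓ m) + 2 * 2⁻¹ ^ L ≤ ε m * 2⁻¹ ^ (ℓ m) := hmono m hm
        _ ≤ μ (P ∩ cyl σ) := hlow
        _ ≤ 2⁻¹ ^ L + ε (m+1) * 2⁻¹ ^ (ℓ m) := hbound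
        _ = ε (m+1) * 2⁻¹ ^ (ℓ m) + 2⁻¹ ^ L := add_comm _ _
    have hfin2 : ε (m+1) * 2⁻¹ ^ (ℓ m) ≠ ⊤ :=
      ENNReal.mul_ne_top (hfin _) (pow_half_ne_top _)
    have h2le : (2:ℝ≥0∞) * 2⁻¹ ^ L ≤ 2⁻¹ ^ L :=
      (ENNReal.add_le_add_iff_left hfin2).1 hchain
    rw [two_mul] at h2le
    exact absurd h2le
      (not_le.2 (ENNReal.lt_add_right (pow_half_ne_top L) (pow_half_pos L).ne'))
  obtain ⟨τ₁, hτ₁, τ₂, hτ₂, hne⟩ := Finset.one_lt_card.1 htwo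
  obtain ⟨g1, p1, l1⟩ := goodG τ₁ hτ₁
  obtain ⟨g2, p2, l2⟩ := goodG τ₂ hτ₂
  exact ⟨τ₁, τ₂, g1, g2, p1, p2, l1, l2, hne⟩

lemma exists_good (hμ : IsFairCoin μ) (hℓ : StrictMono ℓ) (hεN : ε N < μ P) :
    ∃ σ, Good μ P ℓ ε N σ ∧ σ.length = ℓ N := by
  classical
  set L := ℓ N with hL
  set c := ε N * 2⁻¹ ^ L with hc
  have h0 : ([]:List Bool).length ≤ L := by simp
  by_cases hex : ∃ τ ∈ extFin ([]:List Bool) L, c ≤ μ (P ∩ cyl τ)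
  · obtain ⟨τ, hτE, hτc⟩ := hex
    obtain ⟨-, hlenτ⟩ := (mem_extFin h0).1 hτE
    refine ⟨τ, ⟨⟨N, le_refl N, hlenτ⟩, ?_⟩, hlenτ⟩
    intro n hn hℓn
    rw [hlenτ] at hℓn
    have : n = N := le_antisymm (hℓ.le_iff_le.1 hℓn) hn
    subst this
    rwa [show τ.take (ℓ n) = τ from by rw [← hL, ← hlenτ]; exact List.take_length]
  · exfalso
    push_neg at hex
    have hsum : μ P ≤ ε N := by
      have h1 : μ (P ∩ cyl ([]:List Bool)) ≤ ∑ τ ∈ extFin ([]:List Bool) L, μ (P ∩ cyl τ) :=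
        measure_inter_cyl_le μ P h0
      rw [cyl_nil, Set.inter_univ] at h1
      calc μ P ≤ ∑ τ ∈ extFin ([]:List Bool) L, μ (P ∩ cyl τ) := h1
        _ ≤ (extFin ([]:List Bool) L).card • c := by
            refine Finset.sum_le_card_nsmul _ _ _ ?_
            intro τ hτ
            exact (hex τ hτ).le
        _ = ((extFin ([]:List Bool) L).card : ℝ≥0∞) * c := nsmul_eq_mul _ _
        _ = (2:ℝ≥0∞) ^ (L - 0) * c := by rw [card_extFin]; push_cast; simp
        _ = ε N * ((2:ℝ≥0∞) ^ (L - 0) * 2⁻¹ ^ L) := by rw [hc]; ring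
        _ = ε N * 2⁻¹ ^ 0 := by rw [two_pow_mul_pow_half (Nat.zero_le L)]
        _ = ε N := by simp
    exact absurd hεN (not_lt.2 hsum)

end Stmt15

/-- If `ℓ` is strictly increasing with `∑_n 2^{-(ℓ(n+1) - ℓ(n))} < ∞`
and `P` is closed with `μ(P) > 0`, then there is a nonempty pruned `ℓ`-perfect tree
`T` with `[T] ⊆ P`. -/
theorem stmt_15 (μ : MeasureTheory.Measure (ℕ → Bool)) (hμ : IsFairCoin μ)
    (ℓ : ℕ → ℕ) (hℓ : StrictMono ℓ)
    (hsum : ∑' n : ℕ, (2 : ℝ≥0∞)⁻¹ ^ (ℓ (n + 1) - ℓ n) < ⊤)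
    (P : Set (ℕ → Bool)) (hP : IsClosed P) (hpos : 0 < μ P) :
    ∃ T : Set (List Bool), T.Nonempty ∧ IsTree T ∧ Pruned T ∧ EllPerfect ℓ T ∧
      paths T ⊆ P := by
  classical
  open Stmt15 MeasureTheory Filter in
  have huniv : μ Set.univ = 1 := by
    have h := hμ []
    rw [Stmt15.cyl_nil] at h
    simpa using h
  have hP1 : μ P ≤ 1 := huniv ▸ measure_mono (Set.subset_univ P)
  have hPfin : μ P ≠ ⊤ := ne_top_of_le_ne_top (by norm_num) hP1
  set d : ℕ → ℝ≥0∞ := fun n => 2⁻¹ ^ (ℓ (n+1) - ℓ n) with hd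
  have hsum' : ∑' n, d n ≠ ⊤ := hsum.ne
  set tail : ℕ → ℝ≥0∞ := fun n => ∑' k, d (n + k) with htail
  have htail_le : ∀ n, tail n ≤ ∑' k, d k := fun n =>
    ENNReal.tsum_comp_le_tsum_of_injective (add_right_injective n) d
  have htail_fin : ∀ n, tail n ≠ ⊤ := fun n =>
    ne_top_of_le_ne_top hsum' (htail_le n)
  have htail_step : ∀ n, tail n = d n + tail (n+1) := by
    intro n
    show (∑' k, d (n + k)) = d n + ∑' k, d ((n+1) + k)
    rw [tsum_eq_zero_add' ENNReal.summable]
    congr 1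
    exact tsum_congr fun k => by congr 1; omega
  have htail0 : Filter.Tendsto tail Filter.atTop (nhds 0) := by
    have h := ENNReal.tendsto_sum_nat_add d hsum'
    have heq : tail = fun i => ∑' k, d (k + i) := by
      funext i
      exact tsum_congr fun k => by rw [add_comm]
    rw [heq]
    exact h
  set δ : ℝ≥0∞ := μ P / 2 with hδ
  have hδ0 : δ ≠ 0 := by
    rw [hδ, Ne, ENNReal.div_eq_zero_iff]
    push_neg
    exact ⟨hpos.ne', by norm_num⟩
  have hδfin : δ ≠ ⊤ := by
    rw [hδ]
    exact ne_top_of_le_ne_top hPfin ENNReal.half_le_self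
  have hhalf : (0:ℝ≥0∞) < δ / 2 := ENNReal.div_pos hδ0 (by norm_num)
  obtain ⟨N, hN⟩ := (htail0.eventually_lt_const hhalf).exists
  set ε : ℕ → ℝ≥0∞ := fun n => δ + 2 * tail n with hε
  have hεfin : ∀ n, ε n ≠ ⊤ := by
    intro n
    rw [hε]
    exact ENNReal.add_ne_top.2 ⟨hδfin, ENNReal.mul_ne_top (by norm_num) (htail_fin n)⟩
  have hεstep : ∀ n, ε n = ε (n+1) + 2 * d n := by
    intro n
    show δ + 2 * tail n = (δ + 2 * tail (n+1)) + 2 * d n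
    rw [htail_step n]
    ring
  have hmono : ∀ n, N ≤ n →
      ε (n+1) * 2⁻¹ ^ (ℓ n) + 2 * 2⁻¹ ^ (ℓ (n+1)) ≤ ε n * 2⁻¹ ^ (ℓ n) := by
    intro n _
    have hdn : d n * 2⁻¹ ^ (ℓ n) = 2⁻¹ ^ (ℓ (n+1)) := by
      show (2⁻¹:ℝ≥0∞) ^ (ℓ (n+1) - ℓ n) * 2⁻¹ ^ (ℓ n) = 2⁻¹ ^ (ℓ (n+1))
      rw [← pow_add, Nat.sub_add_cancel (hℓ (Nat.lt_succ_self n)).le]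
    refine le_of_eq ?_
    calc ε (n+1) * 2⁻¹ ^ (ℓ n) + 2 * 2⁻¹ ^ (ℓ (n+1))
        = ε (n+1) * 2⁻¹ ^ (ℓ n) + 2 * (d n * 2⁻¹ ^ (ℓ n)) := by rw [hdn]
      _ = (ε (n+1) + 2 * d n) * 2⁻¹ ^ (ℓ n) := by ring
      _ = ε n * 2⁻¹ ^ (ℓ n) := by rw [← hεstep n]
  have hεN : ε N < μ P := by
    have h1 : 2 * tail N < 2 * (δ / 2) :=
      (ENNReal.mul_lt_mul_iff_right (by norm_num) (by norm_num)).2 hN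
    have h2 : 2 * (δ / 2) = δ := ENNReal.mul_div_cancel' (by norm_num) (by norm_num)
    have h3 : ε N < δ + δ := by
      show δ + 2 * tail N < δ + δ
      exact ENNReal.add_lt_add_left hδfin (h2 ▸ h1)
    have h4 : δ + δ = μ P := by rw [hδ]; exact ENNReal.add_halves _
    exact h4 ▸ h3
  have hεpos : ∀ n, (0:ℝ≥0∞) < ε n := by
    intro n
    rw [hε]
    exact lt_of_lt_of_le (pos_iff_ne_zero.2 hδ0) le_self_add
  obtain ⟨σ0, hσ0good, hσ0len⟩ := Stmt15.exists_good hμ hℓ hεN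
  set T : Set (List Bool) := {τ | ∃ σ, Stmt15.Good μ P ℓ ε N σ ∧ τ <+: σ} with hT
  have memT_good : ∀ τ ∈ T, ∀ n, N ≤ n → τ.length = ℓ n → Stmt15.Good μ P ℓ ε N τ := by
    intro τ hτ n hn hlenτ
    obtain ⟨σ, hgood, hpre⟩ := hτ
    have h1 : ℓ n ≤ σ.length := hlenτ ▸ hpre.length_le
    have h2 : τ = σ.take (ℓ n) := by
      rw [← hlenτ]; exact List.prefix_iff_eq_take.1 hpre
    rw [h2]
    exact Stmt15.Good.take hℓ hgood hn h1
  refine ⟨T, ⟨σ0, σ0, hσ0good, List.prefix_refl σ0⟩, ?_, ?_, ?_, ?_⟩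
  · -- IsTree
    rintro σ ⟨σ', hgood, hpre⟩ τ hτ
    exact ⟨σ', hgood, hτ.trans hpre⟩
  · -- Pruned
    rintro τ ⟨σ, hgood, hpre⟩
    obtain ⟨m, hm, hlenσ⟩ := hgood.1
    obtain ⟨τ₁, τ₂, g1, g2, p1, p2, l1, l2, hne⟩ :=
      Stmt15.good_split hμ hℓ hmono hεfin hm hlenσ hgood
    refine ⟨τ₁, ⟨τ₁, g1, List.prefix_refl τ₁⟩, hpre.trans p1, ?_⟩
    intro heq
    have h1 : τ.length ≤ σ.length := hpre.length_le
    have h2 : σ.length < τ₁.length := by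
      rw [hlenσ, l1]; exact hℓ (Nat.lt_succ_self m)
    have := congrArg List.length heq
    omega
  · -- EllPerfect
    refine Filter.eventually_atTop.2 ⟨N, fun n hn σ hσ hlenσ => ?_⟩
    have hgood := memT_good σ hσ n hn hlenσ
    obtain ⟨τ₁, τ₂, g1, g2, p1, p2, l1, l2, hne⟩ :=
      Stmt15.good_split hμ hℓ hmono hεfin hn hlenσ hgood
    exact ⟨τ₁, ⟨τ₁, g1, List.prefix_refl τ₁⟩, τ₂, ⟨τ₂, g2, List.prefix_refl τ₂⟩,
      p1, p2, l1, l2, hne⟩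
  · -- paths T ⊆ P
    intro x hx
    have key : ∀ m : ℕ, ∃ y, y ∈ P ∧ pre y (ℓ (N + m)) = pre x (ℓ (N + m)) := by
      intro m
      have hmem : pre x (ℓ (N+m)) ∈ T := hx (ℓ (N+m))
      have hgood := memT_good _ hmem (N+m) (Nat.le_add_right N m) (Stmt15.length_pre x _)
      have hth := hgood.2 (N+m) (Nat.le_add_right N m)
        (le_of_eq (Stmt15.length_pre x _).symm)
      rw [show (pre x (ℓ (N+m))).take (ℓ (N+m)) = pre x (ℓ (N+m)) from by
        rw [Stmt15.take_pre, min_self]] at hth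
      have hμpos : 0 < μ (P ∩ cyl (pre x (ℓ (N+m)))) :=
        lt_of_lt_of_le (ENNReal.mul_pos (hεpos (N+m)).ne' (Stmt15.pow_half_pos _).ne') hth
      have hne : (P ∩ cyl (pre x (ℓ (N+m)))).Nonempty := by
        rw [Set.nonempty_iff_ne_empty]
        intro hemp
        rw [hemp, measure_empty] at hμpos
        exact lt_irrefl 0 hμpos
      obtain ⟨y, hyP, hyc⟩ := hne
      refine ⟨y, hyP, ?_⟩
      have := hyc
      rw [Stmt15.mem_cyl, Stmt15.length_pre] at this
      exact this
    choose y hyP hyeq using key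
    have hx' : Filter.Tendsto y Filter.atTop (nhds x) := by
      rw [tendsto_pi_nhds]
      intro i
      apply tendsto_nhds_of_eventually_eq
      refine Filter.eventually_atTop.2 ⟨i+1, fun m hm => ?_⟩
      have hi : i < ℓ (N+m) :=
        lt_of_lt_of_le (by omega : i < N + m) hℓ.le_apply
      exact Stmt15.coord_of_pre_eq (hyeq m) hi
    have hxP : x ∈ closure P :=
      mem_closure_of_tendsto hx' (Filter.Eventually.of_forall hyP)
    rwa [hP.closure_eq] at hxP
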